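/- Let n ≥ 1 and let bV, bF : ℤ × ℤ → EuclideanSpace ℝ (Fin n) be a binet. Then there exist functions ρV, ρF : ℤ × ℤ → ℝ such that ⟪bV(v), bF(f)⟫ = ρV(v) + ρF(f) for every incident vertex–face pair (v, f), if and only if (bV, bF) is an orthogonal binet, i.e. for every v ∈ ℤ × ℤ one has ⟪bV(v+(1,0)) − bV(v), bF(v) − bF(v−(0,1))⟫ = 0 and ⟪bV(v+(0,1)) − bV(v), bF(v) − bF(v−(1,0))⟫ = 0. (This is the coordinate form of the theorem that a binet admits a Möbius lift — an orthogonal sphere representation with centers b(d) and 2ρ(d) = ‖center‖² − radius² — if and only if it is an orthogonal binet.) -/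

import Mathlib

open scoped InnerProductSpace

/-- A vertex `v` is incident to the face labeled `f` if `v` is one of its four corners. -/
def Incident (v f : ℤ × ℤ) : Prop :=
  v = f ∨ v = f + (1, 0) ∨ v = f + (0, 1) ∨ v = f + (1, 1)

noncomputable def csum (f : ℤ → ℝ) (x : ℤ) : ℝ :=
  if 0 ≤ x then ∑ i ∈ Finset.range x.toNat, f i
  else -∑ i ∈ Finset.range (-x).toNat, f (x + i)

lemma csum_zero (f : ℤ → ℝ) : csum f 0 = 0 := by simp [csum]

lemma csum_succ (f : ℤ → ℝ) (x : ℤ) : csum f (x + 1) = csum f x + f x := by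
  rcases le_or_gt 0 x with hx | hx
  · rw [csum, csum, if_pos (by omega), if_pos hx]
    have h1 : (x+1).toNat = x.toNat + 1 := by omega
    rw [h1, Finset.sum_range_succ, Int.toNat_of_nonneg hx]
  · rcases eq_or_lt_of_le (by omega : x + 1 ≤ 0) with h0 | h0
    · have : x = -1 := by omega
      subst this
      simp [csum]
    · rw [csum, csum, if_neg (by omega), if_neg (by omega)]
      have hm : (-x).toNat = (-(x+1)).toNat + 1 := by omega
      rw [hm, Finset.sum_range_succ']
      have he : ∀ i : ℕ, x + (↑(i + 1)) = x + 1 + ↑i := fun i => by push_cast; ring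
      simp only [he]
      simp

theorem stmt_0 (n : ℕ) (hn : 1 ≤ n) (bV bF : ℤ × ℤ → EuclideanSpace ℝ (Fin n)) :
    (∃ ρV ρF : ℤ × ℤ → ℝ, ∀ v f : ℤ × ℤ, Incident v f →
        ⟪bV v, bF f⟫_ℝ = ρV v + ρF f) ↔
      (∀ v : ℤ × ℤ,
        ⟪bV (v + (1, 0)) - bV v, bF v - bF (v - (0, 1))⟫_ℝ = 0 ∧
        ⟪bV (v + (0, 1)) - bV v, bF v - bF (v - (1, 0))⟫_ℝ = 0) := by
  constructor
  · rintro ⟨ρV, ρF, hρ⟩ v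
    have i1 := hρ (v + (1, 0)) v (Or.inr (Or.inl rfl))
    have i2 := hρ (v + (1, 0)) (v - (0, 1))
      (Or.inr (Or.inr (Or.inr (by ext <;> simp <;> ring))))
    have i3 := hρ v v (Or.inl rfl)
    have i4 := hρ v (v - (0, 1)) (Or.inr (Or.inr (Or.inl (by ext <;> simp))))
    have j1 := hρ (v + (0, 1)) v (Or.inr (Or.inr (Or.inl rfl)))
    have j2 := hρ (v + (0, 1)) (v - (1, 0))
      (Or.inr (Or.inr (Or.inr (by ext <;> simp <;> ring))))
    have j4 := hρ v (v - (1, 0)) (Or.inr (Or.inl (by ext <;> simp)))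
    constructor
    · simp only [inner_sub_left, inner_sub_right]
      rw [i1, i2, i3, i4]; ring
    · simp only [inner_sub_left, inner_sub_right]
      rw [j1, j2, i3, j4]; ring
  · intro hC
    set H : ℤ → ℤ → ℤ → ℤ → ℝ := fun a b c d => ⟪bV (a, b), bF (c, d)⟫_ℝ with hH
    have C1 : ∀ x y : ℤ, H (x+1) y x y - H x y x y = H (x+1) y x (y-1) - H x y x (y-1) := by
      intro x y
      have := (hC (x, y)).1
      simp only [inner_sub_left, inner_sub_right, Prod.mk_add_mk, Prod.mk_sub_mk,
        add_zero, zero_add, sub_zero] at this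
      simp only [hH]
      linarith
    have C2 : ∀ x y : ℤ, H x (y+1) x y - H x y x y = H x (y+1) (x-1) y - H x y (x-1) y := by
      intro x y
      have := (hC (x, y)).2
      simp only [inner_sub_left, inner_sub_right, Prod.mk_add_mk, Prod.mk_sub_mk,
        add_zero, zero_add, sub_zero] at this
      simp only [hH]
      linarith
    -- β (x+1) y expressed via face (x,y)
    have B : ∀ x y : ℤ, H (x+1) (y+1) (x+1) y - H (x+1) y (x+1) y
        = H (x+1) (y+1) x y - H (x+1) y x y := by
      intro x y
      have := C2 (x+1) y
      rw [show x + 1 - 1 = x from by ring] at this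
      linarith
    have A1 : ∀ x y : ℤ, H (x+1) (y+1) x (y+1) - H x (y+1) x (y+1)
        = H (x+1) (y+1) x y - H x (y+1) x y := by
      intro x y
      have := C1 x (y+1)
      rw [show y + 1 - 1 = y from by ring] at this
      linarith
    have clos : ∀ x y : ℤ,
        (H (x+1) y x y - H x y x y) + (H (x+1) (y+1) (x+1) y - H (x+1) y (x+1) y)
        = (H x (y+1) x y - H x y x y) + (H (x+1) (y+1) x (y+1) - H x (y+1) x (y+1)) := by
      intro x y
      rw [B x y, A1 x y]
      ring
    set A : ℤ → ℤ → ℝ := fun x y =>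
      csum (fun t => H (t+1) 0 t 0 - H t 0 t 0) x
        + csum (fun t => H x (t+1) x t - H x t x t) y with hA
    have P2 : ∀ x y : ℤ, A x (y+1) = A x y + (H x (y+1) x y - H x y x y) := by
      intro x y
      simp only [hA, csum_succ]
      ring
    have P1 : ∀ y x : ℤ, A (x+1) y = A x y + (H (x+1) y x y - H x y x y) := by
      intro y
      induction y using Int.induction_on with
      | zero =>
        intro x
        simp only [hA, csum_zero, csum_succ]
        ring
      | succ k ih =>
        intro x
        have e1 := P2 (x+1) k
        have e2 := P2 x k
        have := clos x k
        push_cast at *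
        linarith [ih x]
      | pred k ih =>
        intro x
        have e1 := P2 (x+1) (-k-1)
        have e2 := P2 x (-k-1)
        have hc := clos x (-k-1)
        rw [show (-(k:ℤ)-1)+1 = -k from by ring] at e1 e2 hc
        have := ih x
        push_cast at *
        linarith
    refine ⟨fun v => A v.1 v.2, fun f => H f.1 f.2 f.1 f.2 - A f.1 f.2, ?_⟩
    rintro v f h
    obtain ⟨a, b⟩ := f
    rcases h with rfl | rfl | rfl | rfl <;>
      simp only [Prod.mk_add_mk, add_zero, zero_add]
    · simp only [hH]; ring
    · have := P1 b a
      simp only [hH] at this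
      linarith
    · have := P2 a b
      simp only [hH] at this
      linarith
    · have h1 := P1 b a
      have h2 := P2 (a+1) b
      have h3 := B a b
      simp only [hH] at h1 h2 h3
      linarith
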